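/- arXiv:0706.2135 — 3 statements merged into one kernel-verified Lean document; each statement's English description precedes it below -/
import Mathlib

section
/- (Lemma 3.2, local behavior of Υ at u = 1/2.) Let p ≥ 2 be an integer, β, γ > 0 with γ < β², and λ ∈ (0, 1 − γ/β²). Then Υ_{p,β,γ}(1/2) = 0 and Υ'_{p,β,γ}(1/2) = 0, and the second derivative satisfies Υ''_{p,β,γ}(1/2) = 4(2γ²/β² − 1) if p = 2, and Υ''_{p,β,γ}(1/2) = −4 if p ≥ 3. (Near u = 1/2 the first branch of the definition of Υ_{p,β,γ} applies, so Υ is twice differentiable there.) -/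
open Real

/-- `I(u) = u log u + (1-u) log(1-u) + log 2` (entropy functional; note `Real.log 0 = 0`). -/
noncomputable def Ifun (u : ℝ) : ℝ :=
  u * Real.log u + (1 - u) * Real.log (1 - u) + Real.log 2

/-- The function `Υ_{p,β,γ}` (with cut-off parameter `lam`). -/
noncomputable def Ups (p : ℕ) (β γ lam : ℝ) (u : ℝ) : ℝ :=
  if γ / β ^ 2 + lam - 1 ≤ (1 - 2 * u) ^ p then
    γ ^ 2 / β ^ 2 - Ifun u - γ ^ 2 / (β ^ 2 * (1 + (1 - 2 * u) ^ p))
  else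
    γ ^ 2 / β ^ 2 - Ifun u + β ^ 2 * (1 + (1 - 2 * u) ^ p) - 2 * γ

lemma Ifun_hasDerivAt {u : ℝ} (h0 : 0 < u) (h1 : u < 1) :
    HasDerivAt Ifun (Real.log u - Real.log (1 - u)) u := by
  have h1u : (0:ℝ) < 1 - u := by linarith
  have ha : HasDerivAt (fun x : ℝ => x * Real.log x) (Real.log u + 1) u :=
    Real.hasDerivAt_mul_log h0.ne'
  have hin : HasDerivAt (fun x : ℝ => 1 - x) (-1 : ℝ) u := by
    simpa using (hasDerivAt_id u).const_sub 1
  have hb : HasDerivAt (fun x : ℝ => (1 - x) * Real.log (1 - x))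
      ((Real.log (1 - u) + 1) * (-1)) u :=
    (Real.hasDerivAt_mul_log h1u.ne').comp u hin
  have := (ha.add hb).add_const (Real.log 2)
  refine this.congr_deriv ?_
  ring

lemma kpos {p : ℕ} {u : ℝ} (h0 : 0 < u) (h1 : u < 1) :
    0 < 1 + (1 - 2 * u) ^ p := by
  have habs : |1 - 2 * u| < 1 := by rw [abs_lt]; constructor <;> linarith
  rcases Nat.eq_zero_or_pos p with hp | hp
  · simp [hp]
  · have : |(1 - 2 * u) ^ p| < 1 := by
      rw [abs_pow]; exact pow_lt_one₀ (abs_nonneg _) habs hp.ne'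
    have := abs_lt.1 this
    linarith [this.1]

lemma k_hasDerivAt (p : ℕ) (u : ℝ) :
    HasDerivAt (fun x : ℝ => 1 + (1 - 2 * x) ^ p)
      ((p : ℝ) * (1 - 2 * u) ^ (p - 1) * (-2)) u := by
  have hin : HasDerivAt (fun x : ℝ => 1 - 2 * x) (-2 : ℝ) u := by
    simpa using ((hasDerivAt_id u).const_mul (2:ℝ)).const_sub 1
  simpa using ((hin.pow p).const_add 1)

lemma F_hasDerivAt (p : ℕ) (β γ : ℝ) (hβ : β ≠ 0) {u : ℝ} (h0 : 0 < u) (h1 : u < 1) :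
    HasDerivAt (fun u => γ ^ 2 / β ^ 2 - Ifun u - γ ^ 2 / (β ^ 2 * (1 + (1 - 2 * u) ^ p)))
      (Real.log (1 - u) - Real.log u -
        2 * p * (γ ^ 2 / β ^ 2) * (1 - 2 * u) ^ (p - 1) / (1 + (1 - 2 * u) ^ p) ^ 2) u := by
  have hk := k_hasDerivAt p u
  have hkne := (kpos (p := p) h0 h1).ne'
  have hkinv := hk.inv hkne
  have hIf := Ifun_hasDerivAt h0 h1
  have hmain := ((hasDerivAt_const u (γ ^ 2 / β ^ 2)).sub hIf).sub (hkinv.const_mul (γ ^ 2 / β ^ 2))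
  have hfun : (fun u : ℝ => γ ^ 2 / β ^ 2 - Ifun u - γ ^ 2 / (β ^ 2 * (1 + (1 - 2 * u) ^ p)))
      = fun u : ℝ => γ ^ 2 / β ^ 2 - Ifun u - γ ^ 2 / β ^ 2 * (1 + (1 - 2 * u) ^ p)⁻¹ := by
    funext x
    rw [div_mul_eq_div_div]; ring
  rw [hfun]
  refine hmain.congr_deriv ?_
  field_simp
  ring

lemma Fd_hasDerivAt (p : ℕ) (hp : 2 ≤ p) (β γ : ℝ) :
    HasDerivAt (fun u : ℝ => Real.log (1 - u) - Real.log u -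
        2 * p * (γ ^ 2 / β ^ 2) * (1 - 2 * u) ^ (p - 1) / (1 + (1 - 2 * u) ^ p) ^ 2)
      (-4 + 4 * p * ((p : ℝ) - 1) * (γ ^ 2 / β ^ 2) * (0 : ℝ) ^ (p - 2)) (1/2) := by
  have hz : (1 : ℝ) - 2 * (1/2) = 0 := by norm_num
  have hp1 : p - 1 ≠ 0 := by omega
  have hin : HasDerivAt (fun x : ℝ => 1 - x) (-1 : ℝ) (1/2 : ℝ) := by
    simpa using (hasDerivAt_id (1/2 : ℝ)).const_sub 1
  have hin2 : HasDerivAt (fun x : ℝ => 1 - 2 * x) (-2 : ℝ) (1/2 : ℝ) := by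
    simpa using ((hasDerivAt_id (1/2 : ℝ)).const_mul (2:ℝ)).const_sub 1
  have ht1 : HasDerivAt (fun u : ℝ => Real.log (1 - u)) (-2 : ℝ) (1/2 : ℝ) := by
    have := (Real.hasDerivAt_log (x := 1 - (1/2 : ℝ)) (by norm_num)).comp (1/2 : ℝ) hin
    refine this.congr_deriv ?_
    norm_num
  have ht2 : HasDerivAt Real.log (2 : ℝ) (1/2 : ℝ) := by
    have := Real.hasDerivAt_log (x := (1/2 : ℝ)) (by norm_num)
    convert this using 1
    norm_num
  have hA : HasDerivAt (fun u : ℝ => (1 - 2 * u) ^ (p - 1))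
      ((↑(p - 1) : ℝ) * (0 : ℝ) ^ (p - 2) * (-2)) (1/2 : ℝ) := by
    have := hin2.pow (p - 1)
    refine this.congr_deriv ?_
    rw [hz, show p - 1 - 1 = p - 2 from by omega]
  have hk' : HasDerivAt (fun u : ℝ => 1 + (1 - 2 * u) ^ p) (0 : ℝ) (1/2 : ℝ) := by
    have := k_hasDerivAt p (1/2 : ℝ)
    convert this using 1
    rw [hz, zero_pow hp1]
    ring
  have hB : HasDerivAt (fun u : ℝ => (1 + (1 - 2 * u) ^ p) ^ 2) (0 : ℝ) (1/2 : ℝ) := by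
    have := hk'.pow 2
    exact this.congr_deriv (by simp)
  have hBne : ((1 : ℝ) + (1 - 2 * (1/2 : ℝ)) ^ p) ^ 2 ≠ 0 := by
    rw [hz, zero_pow (by omega : p ≠ 0)]; norm_num
  have hN : HasDerivAt (fun u : ℝ => 2 * p * (γ ^ 2 / β ^ 2) * (1 - 2 * u) ^ (p - 1))
      (2 * p * (γ ^ 2 / β ^ 2) * ((↑(p - 1) : ℝ) * (0 : ℝ) ^ (p - 2) * (-2))) (1/2 : ℝ) :=
    hA.const_mul _
  have hdiv := hN.div hB hBne
  have := (ht1.sub ht2).sub hdiv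
  refine this.congr_deriv ?_
  rw [hz, zero_pow hp1, zero_pow (by omega : p ≠ 0)]
  have : ((p : ℝ) - 1) = ((p - 1 : ℕ) : ℝ) := by
    rw [Nat.cast_sub (by omega)]; norm_num
  rw [this]
  field_simp
  ring

lemma Ifun_half : Ifun (1/2 : ℝ) = 0 := by
  have hl : Real.log ((1:ℝ)/2) = -Real.log 2 := by rw [one_div, Real.log_inv]
  unfold Ifun
  rw [show (1:ℝ) - 1/2 = 1/2 by norm_num, hl]
  ring

lemma F_contDiffAt (p : ℕ) (hp : p ≠ 0) (β γ : ℝ) (hβ : β ≠ 0) :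
    ContDiffAt ℝ 2 (fun u : ℝ =>
      γ ^ 2 / β ^ 2 - Ifun u - γ ^ 2 / (β ^ 2 * (1 + (1 - 2 * u) ^ p))) (1/2 : ℝ) := by
  have hlog : ContDiffAt ℝ 2 Real.log (1/2 : ℝ) := Real.contDiffAt_log.2 (by norm_num)
  have h1 : ContDiffAt ℝ 2 (fun u : ℝ => u * Real.log u) (1/2 : ℝ) := contDiffAt_id.mul hlog
  have hlin : ContDiffAt ℝ 2 (fun u : ℝ => 1 - u) (1/2 : ℝ) := by fun_prop
  have hlog2 : ContDiffAt ℝ 2 (fun u : ℝ => Real.log (1 - u)) (1/2 : ℝ) :=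
    (Real.contDiffAt_log.2 (by norm_num : (1:ℝ) - 1/2 ≠ 0)).comp _ hlin
  have hIf : ContDiffAt ℝ 2 Ifun (1/2 : ℝ) := by
    have : Ifun = fun u : ℝ => u * Real.log u + (1 - u) * Real.log (1 - u) + Real.log 2 := rfl
    rw [this]
    exact (h1.add (hlin.mul hlog2)).add contDiffAt_const
  have hden : ContDiffAt ℝ 2 (fun u : ℝ => β ^ 2 * (1 + (1 - 2 * u) ^ p)) (1/2 : ℝ) := by
    fun_prop
  have hdne : β ^ 2 * (1 + (1 - 2 * (1/2 : ℝ)) ^ p) ≠ 0 := by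
    rw [show (1:ℝ) - 2 * (1/2) = 0 by norm_num, zero_pow hp]
    simp [pow_ne_zero, hβ]
  exact (contDiffAt_const.sub hIf).sub (contDiffAt_const.div hden hdne)

/-- Lemma 3.2 (local behavior of `Υ` at `u = 1/2`). -/
theorem stmt6 (p : ℕ) (hp : 2 ≤ p) (β γ lam : ℝ) (hβ : 0 < β) (hγ : 0 < γ)
    (hγβ : γ < β ^ 2) (hlam : lam ∈ Set.Ioo (0 : ℝ) (1 - γ / β ^ 2)) :
    Ups p β γ lam (1 / 2) = 0 ∧
    deriv (Ups p β γ lam) (1 / 2) = 0 ∧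
    ContDiffAt ℝ 2 (Ups p β γ lam) (1 / 2) ∧
    iteratedDeriv 2 (Ups p β γ lam) (1 / 2) =
      (if p = 2 then 4 * (2 * γ ^ 2 / β ^ 2 - 1) else -4) := by
  have hβ2 : (0:ℝ) < β ^ 2 := by positivity
  have hc : γ / β ^ 2 + lam - 1 < 0 := by
    simp only [Set.mem_Ioo] at hlam
    linarith [hlam.2]
  have hppos : p ≠ 0 := by omega
  have hz : ((1:ℝ) - 2 * (1/2)) ^ p = 0 := by
    rw [show (1:ℝ) - 2 * (1/2) = 0 by norm_num, zero_pow hppos]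
  set F : ℝ → ℝ := fun u => γ ^ 2 / β ^ 2 - Ifun u - γ ^ 2 / (β ^ 2 * (1 + (1 - 2 * u) ^ p))
    with hFdef
  set Fd : ℝ → ℝ := fun u => Real.log (1 - u) - Real.log u -
      2 * p * (γ ^ 2 / β ^ 2) * (1 - 2 * u) ^ (p - 1) / (1 + (1 - 2 * u) ^ p) ^ 2 with hFddef
  -- eventual equality Ups ≈ F near 1/2
  have hev : Ups p β γ lam =ᶠ[nhds (1/2 : ℝ)] F := by
    have hcont : ContinuousAt (fun u : ℝ => (1 - 2 * u) ^ p) (1/2) := by fun_prop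
    have h1 : ∀ᶠ u in nhds (1/2 : ℝ), γ / β ^ 2 + lam - 1 < (1 - 2 * u) ^ p := by
      have h2 := hcont.tendsto
      rw [hz] at h2
      exact h2.eventually (eventually_gt_nhds hc)
    filter_upwards [h1] with u hu
    simp only [Ups, if_pos hu.le]
    rfl
  -- deriv F ≈ Fd near 1/2
  have hFD : ∀ u ∈ Set.Ioo (0:ℝ) 1, HasDerivAt F (Fd u) u := fun u hu =>
    F_hasDerivAt p β γ hβ.ne' hu.1 hu.2
  have hevd : deriv F =ᶠ[nhds (1/2 : ℝ)] Fd := by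
    filter_upwards [Ioo_mem_nhds (by norm_num : (0:ℝ) < 1/2) (by norm_num : (1/2:ℝ) < 1)]
      with u hu
    exact (hFD u hu).deriv
  have hFd_half : Fd (1/2) = 0 := by
    rw [hFddef]
    simp only
    rw [show (1:ℝ) - 2 * (1/2) = 0 by norm_num, zero_pow (by omega : p - 1 ≠ 0)]
    ring
  refine ⟨?_, ?_, ?_, ?_⟩
  · rw [hev.eq_of_nhds, hFdef]
    simp only
    rw [hz, Ifun_half]
    field_simp
    ring
  · rw [hev.deriv_eq, hevd.eq_of_nhds, hFd_half]
  · exact (F_contDiffAt p hppos β γ hβ.ne').congr_of_eventuallyEq hev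
  · rw [iteratedDeriv_succ, iteratedDeriv_one]
    rw [hev.deriv.deriv_eq, hevd.deriv_eq, (Fd_hasDerivAt p hp β γ).deriv]
    rcases eq_or_lt_of_le hp with he | hlt
    · rw [if_pos he.symm, ← he]
      norm_num
      ring
    · rw [if_neg (by omega), zero_pow (by omega : p - 2 ≠ 0)]
      ring
end

section
/- (Lemma 3.2, the case p = 2.) Let β, γ > 0 satisfy γ ≤ β/√2 and γ < β², and let λ ∈ (0, 1 − γ/β²). Then Υ_{2,β,γ}(u) ≤ 0 for all u ∈ [0,1]. (For p = 2 and γ < β² the first branch of the definition always applies, i.e. Υ_{2,β,γ}(u) = γ²/β² − I(u) − γ²/(β²(1+(1−2u)²)); the proof uses I(u) ≥ (1−2u)²/2 and the monotonicity of Υ in γ²/β².) -/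
open Real

lemma logderiv (y : ℝ) (hy : 0 < 1 + y) :
    HasDerivAt (fun t : ℝ => Real.log (1 + t)) (1 / (1 + y)) y := by
  have h1 : HasDerivAt (fun t : ℝ => 1 + t) 1 y := by
    simpa using (hasDerivAt_id' y).const_add 1
  simpa using h1.log (ne_of_gt hy)

lemma aux1 (x : ℝ) (hx : 0 ≤ x) : x - x^2/2 ≤ Real.log (1+x) := by
  set f : ℝ → ℝ := fun t => Real.log (1+t) - (t - t^2/2) with hf
  have key : MonotoneOn f (Set.Ici 0) := by
    apply monotoneOn_of_deriv_nonneg (convex_Ici 0)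
    · apply ContinuousOn.sub
      · apply ContinuousOn.log (by fun_prop)
        intro y hy; simp only [Set.mem_Ici] at hy; nlinarith
      · fun_prop
    · intro y hy
      rw [interior_Ici] at hy
      simp only [Set.mem_Ioi] at hy
      exact ((logderiv y (by nlinarith)).sub
        ((hasDerivAt_id' y).sub ((hasDerivAt_pow 2 y).div_const 2))).differentiableAt.differentiableWithinAt
    · intro y hy
      rw [interior_Ici] at hy
      simp only [Set.mem_Ioi] at hy
      have h2 := (logderiv y (by nlinarith)).sub
        ((hasDerivAt_id' y).sub ((hasDerivAt_pow 2 y).div_const 2))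
      rw [show deriv f y = _ from h2.deriv]
      have hpos : (0:ℝ) < 1 + y := by nlinarith
      have h3 : (1+y) * (1+y)⁻¹ = 1 := mul_inv_cancel₀ (ne_of_gt hpos)
      norm_num
      nlinarith [sq_nonneg y, hpos, h3]
  have h0 : f 0 ≤ f x := key (by simp) hx hx
  simp only [hf] at h0
  simp at h0
  linarith

lemma aux2 (x : ℝ) (hx : 0 ≤ x) (hx1 : x < 1) : Real.log (1-x) ≤ -(x + x^2/2) := by
  set f : ℝ → ℝ := fun t => -(t + t^2/2) - Real.log (1-t) with hf
  have key : MonotoneOn f (Set.Ico 0 1) := by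
    apply monotoneOn_of_deriv_nonneg (convex_Ico 0 1)
    · apply ContinuousOn.sub (by fun_prop)
      apply ContinuousOn.log (by fun_prop)
      intro y hy; simp only [Set.mem_Ico] at hy; nlinarith
    · intro y hy
      rw [interior_Ico] at hy
      obtain ⟨hy0, hy1⟩ := hy
      have h1 : HasDerivAt (fun t : ℝ => 1 - t) (-1) y := by
        simpa using ((hasDerivAt_id' y).const_sub 1)
      exact ((((hasDerivAt_id' y).add ((hasDerivAt_pow 2 y).div_const 2)).neg).sub
        (h1.log (by nlinarith))).differentiableAt.differentiableWithinAt
    · intro y hy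
      rw [interior_Ico] at hy
      obtain ⟨hy0, hy1⟩ := hy
      have h1 : HasDerivAt (fun t : ℝ => 1 - t) (-1) y := by
        simpa using ((hasDerivAt_id' y).const_sub 1)
      have h2 := (((hasDerivAt_id' y).add ((hasDerivAt_pow 2 y).div_const 2)).neg).sub
        (h1.log (by nlinarith))
      rw [show deriv f y = _ from h2.deriv]
      have hpos : (0:ℝ) < 1 - y := by nlinarith
      have h3 : (1-y) * (-1/(1-y)) = -1 := by field_simp
      norm_num
      nlinarith [sq_nonneg y, hpos, h3]
  have h0 : f 0 ≤ f x := key (by constructor <;> norm_num) ⟨hx, hx1⟩ hx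
  simp only [hf] at h0
  simp at h0
  linarith

lemma aux3 (s : ℝ) (h0 : 0 ≤ s) (h1 : s ≤ 1) :
    s^2 ≤ (1+s)*Real.log (1+s) + (1-s)*Real.log (1-s) := by
  rcases eq_or_lt_of_le h1 with rfl | h1'
  · norm_num
    nlinarith [Real.log_two_gt_d9]
  · set g : ℝ → ℝ := fun t => (1+t)*Real.log (1+t) + (1-t)*Real.log (1-t) - t^2 with hg
    have key : MonotoneOn g (Set.Ico 0 1) := by
      apply monotoneOn_of_deriv_nonneg (convex_Ico 0 1)
      · apply ContinuousOn.sub (ContinuousOn.add ?_ ?_) (by fun_prop)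
        · exact ContinuousOn.mul (by fun_prop) (ContinuousOn.log (by fun_prop)
            (fun y hy => by simp only [Set.mem_Ico] at hy; nlinarith))
        · exact ContinuousOn.mul (by fun_prop) (ContinuousOn.log (by fun_prop)
            (fun y hy => by simp only [Set.mem_Ico] at hy; nlinarith))
      · intro y hy
        rw [interior_Ico] at hy
        obtain ⟨hy0, hy1⟩ := hy
        have hp : HasDerivAt (fun t : ℝ => 1 + t) 1 y := by
          simpa using (hasDerivAt_id' y).const_add 1
        have hm : HasDerivAt (fun t : ℝ => 1 - t) (-1) y := by
          simpa using ((hasDerivAt_id' y).const_sub 1)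
        exact (((hp.mul (hp.log (by nlinarith))).add
          (hm.mul (hm.log (by nlinarith)))).sub
          (hasDerivAt_pow 2 y)).differentiableAt.differentiableWithinAt
      · intro y hy
        rw [interior_Ico] at hy
        obtain ⟨hy0, hy1⟩ := hy
        have hp : HasDerivAt (fun t : ℝ => 1 + t) 1 y := by
          simpa using (hasDerivAt_id' y).const_add 1
        have hm : HasDerivAt (fun t : ℝ => 1 - t) (-1) y := by
          simpa using ((hasDerivAt_id' y).const_sub 1)
        have h2 := ((hp.mul (hp.log (by nlinarith))).add
          (hm.mul (hm.log (by nlinarith)))).sub (hasDerivAt_pow 2 y)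
        rw [show deriv g y = _ from h2.deriv]
        have e1 : (1+y) * (1+y)⁻¹ = 1 := by
          field_simp
        have e2 : (1-y) * (-1/(1-y)) = -1 := by
          have : (1:ℝ) - y ≠ 0 := by nlinarith
          field_simp
        have b1 := aux1 y hy0.le
        have b2 := aux2 y hy0.le hy1
        norm_num
        linarith [e1, e2, b1, b2]
    have h0' : g 0 ≤ g s := key (by constructor <;> norm_num) ⟨h0, h1'⟩ h0
    simp only [hg] at h0'
    norm_num at h0'
    linarith

lemma aux3' (s : ℝ) (h0 : -1 ≤ s) (h1 : s ≤ 1) :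
    s^2 ≤ (1+s)*Real.log (1+s) + (1-s)*Real.log (1-s) := by
  rcases le_total 0 s with hs | hs
  · exact aux3 s hs h1
  · have := aux3 (-s) (by linarith) (by linarith)
    have e : (1 + -s) = 1 - s := by ring
    have e' : (1 - -s) = 1 + s := by ring
    rw [e, e'] at this
    nlinarith [this]

lemma aux4 (u : ℝ) (hu0 : 0 ≤ u) (hu1 : u ≤ 1) : (1-2*u)^2/2 ≤ Ifun u := by
  obtain ⟨s, hs⟩ : ∃ s : ℝ, s = 1 - 2*u := ⟨_, rfl⟩
  rw [← hs]
  have e1 : 1 - s = 2*u := by rw [hs]; ring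
  have e2 : 1 + s = 2*(1-u) := by rw [hs]; ring
  have hid : Ifun u = ((1-s)*Real.log (1-s) + (1+s)*Real.log (1+s))/2 := by
    rw [e1, e2]
    rcases eq_or_lt_of_le hu0 with rfl | hu0'
    · simp [Ifun]
    rcases eq_or_lt_of_le hu1 with rfl | hu1'
    · simp [Ifun]
    · rw [Real.log_mul (by norm_num) (ne_of_gt hu0'),
        Real.log_mul (by norm_num) (ne_of_gt (by linarith : (0:ℝ) < 1 - u)), Ifun]
      ring
  have hb := aux3' s (by rw [hs]; linarith) (by rw [hs]; linarith)
  rw [hid]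
  linarith

/-- Lemma 3.2, the case `p = 2`: if `γ ≤ β/√2` and `γ < β²` then `Υ_{2,β,γ} ≤ 0` on `[0,1]`. -/
theorem stmt7 (β γ lam : ℝ) (hβ : 0 < β) (hγ : 0 < γ)
    (hγ2 : γ ≤ β / Real.sqrt 2) (hγβ : γ < β ^ 2)
    (hlam : lam ∈ Set.Ioo (0 : ℝ) (1 - γ / β ^ 2)) :
    ∀ u ∈ Set.Icc (0 : ℝ) 1, Ups 2 β γ lam u ≤ 0 := by
  rintro u ⟨hu0, hu1⟩
  obtain ⟨hl0, hl1⟩ := hlam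
  have hcond : γ / β ^ 2 + lam - 1 ≤ (1 - 2 * u) ^ 2 := by nlinarith [sq_nonneg (1 - 2*u)]
  rw [Ups, if_pos hcond]
  set t : ℝ := (1 - 2*u)^2 with htdef
  have ht : 0 ≤ t := sq_nonneg _
  have h1t : (0:ℝ) < 1 + t := by linarith
  set c : ℝ := γ^2/β^2 with hcdef
  have hc0 : 0 ≤ c := by positivity
  have hc : c ≤ 1/2 := by
    have hs2 : (0:ℝ) < Real.sqrt 2 := by positivity
    have h2 : γ^2 ≤ (β / Real.sqrt 2)^2 := by nlinarith [div_pos hβ hs2]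
    have h3 : (β / Real.sqrt 2)^2 = β^2/2 := by
      rw [div_pow, Real.sq_sqrt (by norm_num : (2:ℝ) ≥ 0)]
    rw [hcdef, div_le_iff₀ (by positivity)]
    nlinarith
  have e1 : γ^2/(β^2*(1+t)) = c/(1+t) := by rw [hcdef, div_div]
  rw [e1]
  have hI : t/2 ≤ Ifun u := by
    have := aux4 u hu0 hu1
    linarith
  have hct : c/(1+t) * (1+t) = c := div_mul_cancel₀ _ (ne_of_gt h1t)
  have hd0 : 0 ≤ c/(1+t) := by positivity
  nlinarith [hct, hd0, ht, hc, hI]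
end

section
/- (Lemma 3.2, global negativity of Υ.) For every integer p ≥ 2 there exists ζ_p ∈ (0, √(2 log 2)] such that for all β, γ > 0 with γ < min(β², ζ_p·β) and all λ ∈ (0, 1 − γ/β²) sufficiently small, there exist positive constants δ, δ' and c (depending on p, β, γ, λ) such that Υ_{p,β,γ}(u) ≤ −δ for all u ∈ [0,1] \ (1/2 − δ', 1/2 + δ'), and Υ_{p,β,γ}(u) ≤ −c (u − 1/2)² for all u ∈ (1/2 − δ', 1/2 + δ'). Moreover, ζ_p may be chosen nondecreasing in p with ζ_2 = 2^{−1/2} and lim_{p→∞} ζ_p = √(2 log 2). -/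
open Real Filter

private lemma hasDerivAt_gfun {y : ℝ} (hy : y ≠ 0) :
    HasDerivAt (fun z : ℝ => Real.log z - (z - 1) + (z - 1) ^ 2 / 2) (y⁻¹ - 1 + (y - 1)) y := by
  have h2 : HasDerivAt (fun z : ℝ => z - 1) 1 y := (hasDerivAt_id y).sub_const 1
  have h3 : HasDerivAt (fun z : ℝ => (z - 1) ^ 2 / 2) (y - 1) y := by
    have := (h2.pow 2).div_const 2
    exact this.congr_deriv (by norm_num)
  exact ((Real.hasDerivAt_log hy).sub h2).add h3

private lemma gfun_mono : MonotoneOn (fun z : ℝ => Real.log z - (z - 1) + (z - 1) ^ 2 / 2)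
    (Set.Ioi (0:ℝ)) := by
  apply monotoneOn_of_deriv_nonneg (convex_Ioi 0)
  · intro y hy
    exact (hasDerivAt_gfun (ne_of_gt hy)).continuousAt.continuousWithinAt
  · intro y hy
    rw [interior_Ioi] at hy
    exact (hasDerivAt_gfun (ne_of_gt hy)).differentiableAt.differentiableWithinAt
  · intro y hy
    rw [interior_Ioi] at hy
    rw [(hasDerivAt_gfun (ne_of_gt hy)).deriv]
    have hy' : (y:ℝ) ≠ 0 := ne_of_gt hy
    have h1 : y * (y⁻¹ - 1 + (y - 1)) = (y - 1) ^ 2 := by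
      field_simp
      ring
    have h2 : (0:ℝ) ≤ y * (y⁻¹ - 1 + (y - 1)) := h1 ▸ sq_nonneg (y - 1)
    exact nonneg_of_mul_nonneg_right h2 hy

private lemma g_nonneg {x : ℝ} (hx : 1 ≤ x) :
    0 ≤ Real.log x - (x - 1) + (x - 1) ^ 2 / 2 := by
  have := gfun_mono (Set.mem_Ioi.mpr one_pos) (Set.mem_Ioi.mpr (lt_of_lt_of_le one_pos hx)) hx
  simpa using this

private lemma g_nonpos {x : ℝ} (hx0 : 0 < x) (hx : x ≤ 1) :
    Real.log x - (x - 1) + (x - 1) ^ 2 / 2 ≤ 0 := by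
  have := gfun_mono (Set.mem_Ioi.mpr hx0) (Set.mem_Ioi.mpr one_pos) hx
  simpa using this


private lemma hasDerivAt_ffun {y : ℝ} (hy : y ≠ 0) :
    HasDerivAt (fun z : ℝ => z * Real.log z - ((z - 1) + (z - 1) ^ 2 / 2 - (z - 1) ^ 3 / 6))
      (Real.log y - (y - 1) + (y - 1) ^ 2 / 2) y := by
  have h2 : HasDerivAt (fun z : ℝ => z - 1) 1 y := (hasDerivAt_id y).sub_const 1
  have h3 : HasDerivAt (fun z : ℝ => (z - 1) + (z - 1) ^ 2 / 2 - (z - 1) ^ 3 / 6)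
      (1 + (y - 1) - (y - 1) ^ 2 / 2) y := by
    have := (h2.add ((h2.pow 2).div_const 2)).sub ((h2.pow 3).div_const 6)
    exact this.congr_deriv (by norm_num; ring)
  have := (Real.hasDerivAt_mul_log hy).sub h3
  exact this.congr_deriv (by ring)

private lemma mul_log_lb {x : ℝ} (hx0 : 0 ≤ x) :
    (x - 1) + (x - 1) ^ 2 / 2 - (x - 1) ^ 3 / 6 ≤ x * Real.log x := by
  rcases eq_or_lt_of_le hx0 with h | h
  · rw [← h]
    norm_num
  rcases le_or_gt x 1 with hx1 | hx1
  · -- antitone on [x,1]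
    have hanti : AntitoneOn
        (fun z : ℝ => z * Real.log z - ((z - 1) + (z - 1) ^ 2 / 2 - (z - 1) ^ 3 / 6))
        (Set.Icc x 1) := by
      apply antitoneOn_of_deriv_nonpos (convex_Icc x 1)
      · intro y hy
        exact (hasDerivAt_ffun (ne_of_gt (lt_of_lt_of_le h hy.1))).continuousAt.continuousWithinAt
      · intro y hy
        rw [interior_Icc] at hy
        exact (hasDerivAt_ffun (ne_of_gt (lt_trans h hy.1))).differentiableAt.differentiableWithinAt
      · intro y hy
        rw [interior_Icc] at hy
        rw [(hasDerivAt_ffun (ne_of_gt (lt_trans h hy.1))).deriv]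
        exact g_nonpos (lt_trans h hy.1) (le_of_lt hy.2)
    have := hanti (Set.mem_Icc.mpr ⟨le_refl x, hx1⟩) (Set.mem_Icc.mpr ⟨hx1, le_refl 1⟩) hx1
    simp only [Real.log_one, mul_zero] at this
    linarith
  · have hmono : MonotoneOn
        (fun z : ℝ => z * Real.log z - ((z - 1) + (z - 1) ^ 2 / 2 - (z - 1) ^ 3 / 6))
        (Set.Icc 1 x) := by
      apply monotoneOn_of_deriv_nonneg (convex_Icc 1 x)
      · intro y hy
        exact (hasDerivAt_ffun (ne_of_gt (lt_of_lt_of_le one_pos hy.1))).continuousAt.continuousWithinAt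
      · intro y hy
        rw [interior_Icc] at hy
        exact (hasDerivAt_ffun (ne_of_gt (lt_trans one_pos hy.1))).differentiableAt.differentiableWithinAt
      · intro y hy
        rw [interior_Icc] at hy
        rw [(hasDerivAt_ffun (ne_of_gt (lt_trans one_pos hy.1))).deriv]
        exact g_nonneg (le_of_lt hy.1)
    have := hmono (Set.mem_Icc.mpr ⟨le_refl 1, le_of_lt hx1⟩)
      (Set.mem_Icc.mpr ⟨le_of_lt hx1, le_refl x⟩) (le_of_lt hx1)
    simp only [Real.log_one, mul_zero] at this
    linarith

private lemma Ifun_zero : Ifun 0 = Real.log 2 := by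
  simp [Ifun]

private lemma Ifun_symm (u : ℝ) : Ifun (1 - u) = Ifun u := by
  simp only [Ifun, sub_sub_cancel]
  ring

private lemma pinsker {u : ℝ} (h0 : 0 ≤ u) (h1 : u ≤ 1) :
    2 * (u - 1 / 2) ^ 2 ≤ Ifun u := by
  rcases eq_or_lt_of_le h0 with h | hu0
  · rw [← h, Ifun_zero]
    nlinarith [Real.log_two_gt_d9]
  rcases eq_or_lt_of_le h1 with h | hu1
  · rw [h, ← Ifun_symm 1]
    simp only [sub_self, Ifun_zero]
    nlinarith [Real.log_two_gt_d9]
  have ha := mul_log_lb (x := 2 * u) (by linarith)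
  have hb := mul_log_lb (x := 2 * (1 - u)) (by linarith)
  rw [Real.log_mul two_ne_zero (ne_of_gt hu0)] at ha
  rw [Real.log_mul two_ne_zero (by linarith : (1:ℝ) - u ≠ 0)] at hb
  unfold Ifun
  nlinarith [ha, hb]

private lemma Ifun_nonneg {u : ℝ} (h0 : 0 ≤ u) (h1 : u ≤ 1) : 0 ≤ Ifun u :=
  le_trans (by positivity) (pinsker h0 h1)

private lemma Ifun_le_log2 {u : ℝ} (h0 : 0 ≤ u) (h1 : u ≤ 1) : Ifun u ≤ Real.log 2 := by
  have ha : u * Real.log u ≤ 0 := mul_nonpos_of_nonneg_of_nonpos h0 (Real.log_nonpos h0 h1)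
  have hb : (1 - u) * Real.log (1 - u) ≤ 0 :=
    mul_nonpos_of_nonneg_of_nonpos (by linarith) (Real.log_nonpos (by linarith) (by linarith))
  unfold Ifun
  linarith

private lemma hasDerivAt_Ifun {y : ℝ} (hy0 : 0 < y) (hy1 : y < 1) :
    HasDerivAt Ifun (Real.log y - Real.log (1 - y)) y := by
  have h1 := Real.hasDerivAt_mul_log (ne_of_gt hy0)
  have hin : HasDerivAt (fun z : ℝ => 1 - z) (-1) y := by
    simpa using (hasDerivAt_id y).const_sub 1
  have h2 : HasDerivAt (fun z : ℝ => (1 - z) * Real.log (1 - z))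
      ((Real.log (1 - y) + 1) * (-1)) y :=
    HasDerivAt.comp y (Real.hasDerivAt_mul_log (by linarith : (1:ℝ) - y ≠ 0)) hin
  have := (h1.add h2).add_const (Real.log 2)
  exact this.congr_deriv (by ring)

private lemma Ifun_anti {a b : ℝ} (h0 : 0 ≤ a) (hab : a ≤ b) (hb : b ≤ 1 / 2) :
    Ifun b ≤ Ifun a := by
  rcases eq_or_lt_of_le h0 with h | ha0
  · rw [← h, Ifun_zero]
    exact Ifun_le_log2 (by linarith) (by linarith)
  have hanti : AntitoneOn Ifun (Set.Icc a (1/2)) := by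
    apply antitoneOn_of_deriv_nonpos (convex_Icc _ _)
    · intro y hy
      exact (hasDerivAt_Ifun (lt_of_lt_of_le ha0 hy.1)
        (by linarith [hy.2] : y < 1)).continuousAt.continuousWithinAt
    · intro y hy
      rw [interior_Icc] at hy
      exact (hasDerivAt_Ifun (lt_trans ha0 hy.1)
        (by linarith [hy.2] : y < 1)).differentiableAt.differentiableWithinAt
    · intro y hy
      rw [interior_Icc] at hy
      rw [(hasDerivAt_Ifun (lt_trans ha0 hy.1) (by linarith [hy.2] : y < 1)).deriv]
      have : Real.log y ≤ Real.log (1 - y) :=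
        Real.log_le_log (lt_trans ha0 hy.1) (by linarith [hy.2])
      linarith
  exact hanti (Set.mem_Icc.mpr ⟨le_refl a, le_trans hab hb⟩) (Set.mem_Icc.mpr ⟨hab, hb⟩) hab

private lemma Ifun_continuous : Continuous Ifun := by
  unfold Ifun
  exact (Real.continuous_mul_log.add
    (Real.continuous_mul_log.comp (continuous_const.sub continuous_id))).add continuous_const

noncomputable def Acand (k : ℕ) : ℝ :=
  min (Ifun (1 / (k:ℝ))) ((1 - 2 / (k:ℝ)) ^ 2 / (4 * (1 - 2 / (k:ℝ)) ^ k))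

noncomputable def Mseq : ℕ → ℝ
  | 0 => 1 / 2
  | (n + 1) => if n + 1 < 3 then 1 / 2 else max (Mseq n) (2 * Acand (n + 1))

private lemma Mseq_two : Mseq 2 = 1 / 2 := by
  norm_num [Mseq]

private lemma Mseq_succ {n : ℕ} (h : 3 ≤ n + 1) :
    Mseq (n + 1) = max (Mseq n) (2 * Acand (n + 1)) := by
  rw [Mseq, if_neg (by omega)]

private lemma acand_base {k : ℕ} (hk : 3 ≤ k) :
    0 < 1 - 2 / (k:ℝ) ∧ 1 - 2 / (k:ℝ) < 1 ∧ (0:ℝ) < 1 / (k:ℝ) ∧ 1 / (k:ℝ) ≤ 1 / 2 := by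
  have hk3 : (3:ℝ) ≤ (k:ℝ) := by exact_mod_cast hk
  have hkpos : (0:ℝ) < (k:ℝ) := by linarith
  refine ⟨?_, ?_, ?_, ?_⟩
  · have : 2 / (k:ℝ) ≤ 2 / 3 := by
      apply div_le_div_of_nonneg_left (by norm_num) (by norm_num) hk3
    linarith
  · have : 0 < 2 / (k:ℝ) := by positivity
    linarith
  · positivity
  · rw [div_le_div_iff₀ hkpos (by norm_num)]
    linarith

private lemma Acand_le_log2 {k : ℕ} (hk : 3 ≤ k) : Acand k ≤ Real.log 2 := by
  obtain ⟨_, _, h3, h4⟩ := acand_base hk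
  exact le_trans (min_le_left _ _) (Ifun_le_log2 (le_of_lt h3) (by linarith))

private lemma Mseq_lb : ∀ p, 1 / 2 ≤ Mseq p := by
  intro p
  induction p with
  | zero => simp [Mseq]
  | succ n ih =>
    rw [Mseq]
    split_ifs with h
    · exact le_refl _
    · exact le_trans ih (le_max_left _ _)

private lemma Mseq_ub : ∀ p, Mseq p ≤ 2 * Real.log 2 := by
  intro p
  have hl2 := Real.log_two_gt_d9
  induction p with
  | zero => rw [Mseq]; linarith
  | succ n ih =>
    rw [Mseq]
    split_ifs with h
    · linarith
    · exact max_le ih (by linarith [Acand_le_log2 (show 3 ≤ n + 1 by omega)])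

private lemma Mseq_mono : Monotone Mseq := by
  apply monotone_nat_of_le_succ
  intro n
  rcases lt_or_ge (n + 1) 3 with h | h
  · have hn : n = 0 ∨ n = 1 := by omega
    rcases hn with h0 | h0 <;> subst h0 <;> norm_num [Mseq]
  · rw [Mseq_succ h]
    exact le_max_left _ _

private lemma Mseq_key : ∀ p, 2 ≤ p → ∀ t : ℝ, 0 < t → t ≤ 1 →
    Mseq p * t ^ p ≤ Ifun ((1 - t) / 2) * (1 + t ^ p) := by
  intro p hp
  induction p, hp using Nat.le_induction with
  | base =>
    intro t ht0 ht1
    have hP : 2 * ((1 - t) / 2 - 1 / 2) ^ 2 ≤ Ifun ((1 - t) / 2) :=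
      pinsker (by linarith) (by linarith)
    have hP' : t ^ 2 / 2 ≤ Ifun ((1 - t) / 2) := by nlinarith [hP]
    rw [Mseq_two]
    nlinarith [hP', sq_nonneg t, pow_pos ht0 2]
  | succ n hn ih =>
    intro t ht0 ht1
    have htp : (0:ℝ) < t ^ n := pow_pos ht0 n
    have htp1 : t ^ n ≤ 1 := pow_le_one₀ (le_of_lt ht0) ht1
    have htp1' : t ^ (n + 1) ≤ 1 := pow_le_one₀ (le_of_lt ht0) ht1
    have hIn : 0 ≤ Ifun ((1 - t) / 2) := Ifun_nonneg (by linarith) (by linarith)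
    rw [Mseq_succ (by omega)]
    rw [max_mul_of_nonneg _ _ (le_of_lt (pow_pos ht0 (n + 1)))]
    apply max_le
    · -- from ih
      have h1 := mul_le_mul_of_nonneg_right (ih t ht0 ht1) (le_of_lt ht0)
      have e1 : Mseq n * t ^ n * t = Mseq n * t ^ (n + 1) := by ring
      have e2 : Ifun ((1 - t) / 2) * (1 + t ^ n) * t
          = Ifun ((1 - t) / 2) * (t + t ^ (n + 1)) := by ring
      rw [e1, e2] at h1
      refine le_trans h1 (mul_le_mul_of_nonneg_left (by linarith) hIn)
    · -- candidate bound
      set k := n + 1 with hk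
      have hk3 : 3 ≤ k := by omega
      obtain ⟨ha0, ha1, hu0, hu12⟩ := acand_base hk3
      set a := 1 - 2 / (k:ℝ) with haa
      have hkR : (0:ℝ) < (k:ℝ) := by positivity
      have huq : (1 - a) / 2 = 1 / (k:ℝ) := by
        rw [haa]; field_simp; ring
      have hAmin1 : Acand k ≤ Ifun (1 / (k:ℝ)) := min_le_left _ _
      have hAmin2 : Acand k ≤ a ^ 2 / (4 * a ^ k) := min_le_right _ _
      clear_value a
      rcases le_or_gt a t with hat | hta
      · -- t ≥ a : use entropy part of the min
        have hA : Acand k ≤ Ifun (1 / (k:ℝ)) := hAmin1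
        have hI1 : Ifun (1 / (k:ℝ)) ≤ Ifun ((1 - t) / 2) := by
          rw [← huq]
          exact Ifun_anti (by linarith) (by linarith) (by rw [huq]; exact hu12)
        have hAI : Acand k ≤ Ifun ((1 - t) / 2) := le_trans hA hI1
        have h2tk : 2 * t ^ k ≤ 1 + t ^ k := by
          have : t ^ k ≤ 1 := pow_le_one₀ (le_of_lt ht0) ht1
          linarith
        calc 2 * Acand k * t ^ k ≤ 2 * Ifun ((1 - t) / 2) * t ^ k := by
              apply mul_le_mul_of_nonneg_right _ (le_of_lt (pow_pos ht0 k))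
              linarith
          _ = Ifun ((1 - t) / 2) * (2 * t ^ k) := by ring
          _ ≤ Ifun ((1 - t) / 2) * (1 + t ^ k) := mul_le_mul_of_nonneg_left h2tk hIn
      · -- t < a : use power part of the min
        have hA : Acand k ≤ a ^ 2 / (4 * a ^ k) := hAmin2
        have hak : (0:ℝ) < a ^ k := pow_pos ha0 k
        have hkey : t ^ k * a ^ 2 ≤ a ^ k * t ^ 2 := by
          have e3 : t ^ k = t ^ (k - 2) * t ^ 2 := by
            rw [← pow_add]; congr 1; omega
          have e4 : a ^ k = a ^ (k - 2) * a ^ 2 := by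
            rw [← pow_add]; congr 1; omega
          have h5 : t ^ (k - 2) ≤ a ^ (k - 2) :=
            pow_le_pow_left₀ (le_of_lt ht0) (le_of_lt hta) _
          rw [e3, e4]
          have h6 := mul_le_mul_of_nonneg_right h5
            (mul_nonneg (sq_nonneg t) (sq_nonneg a))
          nlinarith [h6]
        have hP : t ^ 2 / 2 ≤ Ifun ((1 - t) / 2) := by
          have := pinsker (u := (1 - t) / 2) (by linarith) (by linarith)
          nlinarith [this]
        have hstep : 2 * (a ^ 2 / (4 * a ^ k)) * t ^ k ≤ t ^ 2 / 2 := by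
          have e5 : 2 * (a ^ 2 / (4 * a ^ k)) * t ^ k = a ^ 2 * t ^ k / (2 * a ^ k) := by
            field_simp
            ring
          rw [e5, div_le_div_iff₀ (by positivity) (by norm_num : (0:ℝ) < 2)]
          nlinarith [hkey]
        have htk0 : (0:ℝ) ≤ t ^ k := le_of_lt (pow_pos ht0 k)
        calc 2 * Acand k * t ^ k ≤ 2 * (a ^ 2 / (4 * a ^ k)) * t ^ k := by
              apply mul_le_mul_of_nonneg_right _ htk0
              linarith
          _ ≤ t ^ 2 / 2 := hstep
          _ ≤ Ifun ((1 - t) / 2) := by linarith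
          _ ≤ Ifun ((1 - t) / 2) * (1 + t ^ k) :=
              le_mul_of_one_le_right hIn (by linarith [pow_pos ht0 k])

private lemma Acand_tendsto : Tendsto (fun k : ℕ => Acand k) atTop (nhds (Real.log 2)) := by
  have T1 : Tendsto (fun k : ℕ => Ifun (1 / (k:ℝ))) atTop (nhds (Real.log 2)) := by
    rw [← Ifun_zero]
    exact (Ifun_continuous.tendsto 0).comp tendsto_one_div_atTop_nhds_zero_nat
  have Tnum : Tendsto (fun k : ℕ => (1 - 2 / (k:ℝ)) ^ 2) atTop (nhds 1) := by
    have h := (tendsto_const_nhds (x := (1:ℝ)) (f := atTop)).sub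
      (tendsto_const_div_atTop_nhds_zero_nat 2)
    have := h.pow 2
    simpa using this
  have Tden : Tendsto (fun k : ℕ => 4 * (1 - 2 / (k:ℝ)) ^ k) atTop
      (nhds (4 * Real.exp (-2))) := by
    apply Tendsto.const_mul
    have := Real.tendsto_one_add_div_pow_exp (-2)
    apply this.congr
    intro n
    ring_nf
  have T2 : Tendsto (fun k : ℕ => (1 - 2 / (k:ℝ)) ^ 2 / (4 * (1 - 2 / (k:ℝ)) ^ k)) atTop
      (nhds (1 / (4 * Real.exp (-2)))) := by
    exact Tnum.div Tden (by positivity)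
  have hmin : min (Real.log 2) (1 / (4 * Real.exp (-2))) = Real.log 2 := by
    apply min_eq_left
    have he : Real.exp (-2) * Real.exp 2 = 1 := by
      rw [← Real.exp_add]; norm_num
    have he2 : Real.exp 2 = Real.exp 1 * Real.exp 1 := by
      rw [← Real.exp_add]; norm_num
    have h4 : (4:ℝ) ≤ Real.exp 2 := by nlinarith [Real.exp_one_gt_d9]
    have hepos : (0:ℝ) < Real.exp (-2) := Real.exp_pos _
    have : 4 * Real.exp (-2) ≤ 1 := by nlinarith
    have h1 : (1:ℝ) ≤ 1 / (4 * Real.exp (-2)) := by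
      rw [le_div_iff₀ (by positivity)]
      linarith
    nlinarith [Real.log_two_lt_d9]
  have := T1.min T2
  rw [hmin] at this
  exact this

private lemma Mseq_tendsto : Tendsto Mseq atTop (nhds (2 * Real.log 2)) := by
  apply tendsto_of_tendsto_of_tendsto_of_le_of_le' (Acand_tendsto.const_mul 2)
    tendsto_const_nhds
  · filter_upwards [eventually_ge_atTop 3] with p hp
    obtain ⟨n, rfl⟩ : ∃ n, p = n + 1 := ⟨p - 1, by omega⟩
    rw [Mseq_succ hp]
    exact le_max_right _ _
  · filter_upwards with p using Mseq_ub p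

set_option maxHeartbeats 2000000 in
/-- Lemma 3.2, global negativity of `Υ`. -/
theorem stmt8 :
    ∃ ζ : ℕ → ℝ, Monotone ζ ∧ ζ 2 = (2 : ℝ) ^ (-(1 : ℝ) / 2) ∧
      Tendsto ζ atTop (nhds (Real.sqrt (2 * Real.log 2))) ∧
      (∀ p : ℕ, 2 ≤ p → 0 < ζ p ∧ ζ p ≤ Real.sqrt (2 * Real.log 2)) ∧
      ∀ p : ℕ, 2 ≤ p → ∀ β γ : ℝ, 0 < β → 0 < γ → γ < min (β ^ 2) (ζ p * β) →
        ∃ lam₀ : ℝ, 0 < lam₀ ∧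
          ∀ lam : ℝ, 0 < lam → lam < lam₀ → lam < 1 - γ / β ^ 2 →
            ∃ δ : ℝ, 0 < δ ∧ ∃ δ' : ℝ, 0 < δ' ∧ ∃ c : ℝ, 0 < c ∧
              (∀ u ∈ Set.Icc (0 : ℝ) 1, u ∉ Set.Ioo (1 / 2 - δ') (1 / 2 + δ') →
                Ups p β γ lam u ≤ -δ) ∧
              (∀ u ∈ Set.Ioo (1 / 2 - δ') (1 / 2 + δ'),
                Ups p β γ lam u ≤ -c * (u - 1 / 2) ^ 2) := by
  refine ⟨fun p => Real.sqrt (Mseq p), ?_, ?_, ?_, ?_, ?_⟩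
  · exact fun a b hab => Real.sqrt_le_sqrt (Mseq_mono hab)
  · show Real.sqrt (Mseq 2) = (2:ℝ) ^ (-(1:ℝ)/2)
    rw [Mseq_two, show ((1:ℝ)/2) = (2:ℝ)⁻¹ from by norm_num, Real.sqrt_inv,
      show (-(1:ℝ)/2) = -(1/2:ℝ) from by norm_num, Real.rpow_neg (by norm_num),
      ← Real.sqrt_eq_rpow]
  · exact (Real.continuous_sqrt.tendsto _).comp Mseq_tendsto
  · intro p _
    exact ⟨Real.sqrt_pos.mpr (lt_of_lt_of_le (by norm_num) (Mseq_lb p)),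
      Real.sqrt_le_sqrt (Mseq_ub p)⟩
  intro p hp β γ hβ hγ hγm
  have hβ2 : (0:ℝ) < β ^ 2 := by positivity
  have hβ0 : β ≠ 0 := ne_of_gt hβ
  have hγβ2 : γ < β ^ 2 := lt_of_lt_of_le hγm (min_le_left _ _)
  have hγζ : γ < Real.sqrt (Mseq p) * β := lt_of_lt_of_le hγm (min_le_right _ _)
  set r := γ ^ 2 / β ^ 2 with hr
  have hr0 : 0 < r := by rw [hr]; positivity
  have hrM : r < Mseq p := by
    have hM0 : 0 ≤ Mseq p := le_trans (by norm_num) (Mseq_lb p)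
    have h1 : γ ^ 2 < Mseq p * β ^ 2 := by
      have h2 := mul_self_lt_mul_self (le_of_lt hγ) hγζ
      calc γ ^ 2 = γ * γ := sq γ
        _ < (Real.sqrt (Mseq p) * β) * (Real.sqrt (Mseq p) * β) := h2
        _ = Mseq p * β ^ 2 := by rw [show Real.sqrt (Mseq p) * β * (Real.sqrt (Mseq p) * β)
              = Real.sqrt (Mseq p) * Real.sqrt (Mseq p) * β ^ 2 from by ring,
              Real.mul_self_sqrt hM0]
    rw [hr, div_lt_iff₀ hβ2]
    linarith
  have hrγ : r < γ := by
    rw [hr, div_lt_iff₀ hβ2]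
    nlinarith
  clear_value r
  refine ⟨(γ - r) / (2 * β ^ 2), div_pos (by linarith) (by positivity), ?_⟩
  intro lam hlam0 hlam1 hlam2
  have hγb : 0 < γ / β ^ 2 := by positivity
  set s := 1 - γ / β ^ 2 - lam with hs
  have hs0 : 0 < s := by rw [hs]; linarith
  have hs1 : s < 1 := by rw [hs]; linarith
  clear_value s
  set t₀ : ℝ := if p = 2 then 1 else 1 / (4 * r + 1) with ht₀def
  have ht₀0 : 0 < t₀ := by
    rw [ht₀def]; split_ifs
    · norm_num
    · positivity
  have ht₀1 : t₀ ≤ 1 := by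
    rw [ht₀def]; split_ifs
    · exact le_refl 1
    · rw [div_le_one (by positivity)]; linarith
  have hκ0 : 0 < 1/2 - r * t₀ ^ (p - 2) := by
    rw [ht₀def]; split_ifs with hp2
    · subst hp2
      rw [Mseq_two] at hrM
      norm_num
      linarith
    · have hp3 : 3 ≤ p := by omega
      have hd1 : (1:ℝ) / (4*r+1) ≤ 1 := by rw [div_le_one (by positivity)]; linarith
      have h1 : ((1:ℝ) / (4*r+1)) ^ (p-2) ≤ 1/(4*r+1) :=
        pow_le_of_le_one (by positivity) hd1 (by omega)
      have h2 : r * ((1/(4*r+1)) ^ (p-2)) ≤ r * (1/(4*r+1)) :=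
        mul_le_mul_of_nonneg_left h1 hr0.le
      have h3 : r * (1/(4*r+1)) < 1/4 := by
        rw [mul_one_div, div_lt_div_iff₀ (by positivity) (by norm_num)]
        linarith
      linarith
  clear_value t₀
  set κ := 1/2 - r * t₀ ^ (p - 2) with hκdef
  clear_value κ
  set δ'' := min t₀ (min s 1) with hδ''def
  have hδ''0 : 0 < δ'' := lt_min ht₀0 (lt_min hs0 one_pos)
  have hδ''1 : δ'' ≤ 1 := le_trans (min_le_right _ _) (min_le_right _ _)
  have hδ''s : δ'' ≤ s := le_trans (min_le_right _ _) (min_le_left _ _)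
  have hδ''t : δ'' ≤ t₀ := min_le_left _ _
  clear_value δ''
  set δ : ℝ := min (min (δ''^2/2) ((Mseq p - r) * δ''^p / 2)) ((γ - r)/2) with hδdef
  have hδ0 : 0 < δ :=
    lt_min (lt_min (div_pos (pow_pos hδ''0 2) two_pos)
      (div_pos (mul_pos (by linarith) (pow_pos hδ''0 p)) two_pos)) (by linarith)
  have hδa : δ ≤ δ''^2/2 := le_trans (min_le_left _ _) (min_le_left _ _)
  have hδb : δ ≤ (Mseq p - r) * δ''^p / 2 := le_trans (min_le_left _ _) (min_le_right _ _)
  have hδc : δ ≤ (γ - r)/2 := min_le_right _ _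
  clear_value δ
  refine ⟨δ, hδ0, δ''/2, half_pos hδ''0, 4*κ, by linarith, ?_, ?_⟩
  · -- far region
    rintro u ⟨hu0, hu1⟩ hnot
    have hIl : (1-2*u)^2/2 ≤ Ifun u := by nlinarith [pinsker hu0 hu1]
    have hI0 : 0 ≤ Ifun u := Ifun_nonneg hu0 hu1
    have habs : δ'' ≤ |1 - 2*u| := by
      rw [Set.mem_Ioo, not_and_or, not_lt, not_lt] at hnot
      rcases hnot with h | h
      · rw [abs_of_nonneg (by linarith)]; linarith
      · rw [abs_of_nonpos (by linarith)]; linarith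
    have habs1 : |1 - 2*u| ≤ 1 := abs_le.mpr ⟨by linarith, by linarith⟩
    unfold Ups
    set w := (1 - 2*u)^p with hw
    clear_value w
    split_ifs with hcond
    · -- branch 1
      have hw1 : 0 < 1 + w := by linarith
      have hEq : γ^2/β^2 - Ifun u - γ^2/(β^2*(1+w)) = (r*w - Ifun u*(1+w))/(1+w) := by
        rw [hr]
        field_simp
        ring
      rw [hEq, div_le_iff₀ hw1]
      rcases le_or_gt w 0 with hw0 | hw0
      · have h1 : r * w ≤ 0 := mul_nonpos_of_nonneg_of_nonpos hr0.le hw0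
        have h2 : δ''^2/2 ≤ Ifun u := by
          have h3 : δ''^2 ≤ (1-2*u)^2 := by
            have := pow_le_pow_left₀ hδ''0.le habs 2
            rwa [sq_abs] at this
          linarith
        have m1 : 0 ≤ (Ifun u - δ''^2/2) * (1+w) := mul_nonneg (by linarith) hw1.le
        have m2 : 0 ≤ (δ''^2/2 - δ) * (1+w) := mul_nonneg (by linarith) hw1.le
        linarith [h1, m1, m2]
      · have hx : |1-2*u|^p = w := by
          rw [← abs_pow, ← hw, abs_of_pos hw0]
        have hx0 : 0 < |1-2*u| := lt_of_lt_of_le hδ''0 habs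
        have hkey := Mseq_key p hp (|1-2*u|) hx0 habs1
        have hIeq : Ifun ((1 - |1-2*u|)/2) = Ifun u := by
          rcases abs_cases (1-2*u) with ⟨h,_⟩ | ⟨h,_⟩
          · rw [h]
            congr 1
            ring
          · rw [h, show (1 - -(1-2*u))/2 = 1 - u from by ring, Ifun_symm]
        rw [hIeq, hx] at hkey
        have hwp : δ''^p ≤ w := by
          rw [← hx]
          exact pow_le_pow_left₀ hδ''0.le habs p
        have hwle1 : w ≤ 1 := by
          rw [← hx]
          exact pow_le_one₀ (abs_nonneg _) habs1
        have m1 : 0 ≤ (Mseq p - r) * (w - δ''^p) :=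
          mul_nonneg (by linarith) (by linarith)
        have m2 : 0 ≤ δ * (2 - (1+w)) := mul_nonneg hδ0.le (by linarith)
        linarith [hkey, m1, m2, hδb]
    · -- branch 2
      push_neg at hcond
      have hb : β^2*(1+w) ≤ γ + lam*β^2 := by
        have h1 : 1 + w ≤ γ/β^2 + lam := by linarith
        calc β^2*(1+w) ≤ β^2*(γ/β^2+lam) := mul_le_mul_of_nonneg_left h1 hβ2.le
          _ = γ + lam*β^2 := by field_simp
      have hlamβ : lam * β^2 < (γ - r)/2 := by
        have h1 := mul_lt_mul_of_pos_right hlam1 hβ2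
        have h2 : (γ - r)/(2*β^2)*β^2 = (γ - r)/2 := by field_simp
        rwa [h2] at h1
      have hreq : γ^2/β^2 = r := hr.symm
      linarith [hI0, hb, hlamβ, hδc]
  · -- near region
    rintro u ⟨hu0, hu1⟩
    have hu0' : 0 < u := by linarith [hδ''1]
    have hu1' : u < 1 := by linarith [hδ''1]
    have habs : |1 - 2*u| < δ'' := by
      rw [abs_lt]
      constructor <;> linarith
    have hcond : γ/β^2 + lam - 1 ≤ (1-2*u)^p := by
      have h1 : |(1-2*u)^p| ≤ |1-2*u| := by
        rw [abs_pow]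
        exact pow_le_of_le_one (abs_nonneg _) (le_trans habs.le hδ''1) (by omega)
      have h2 : |1-2*u| < s := lt_of_lt_of_le habs hδ''s
      have h3 := neg_abs_le ((1-2*u)^p)
      have h4 : γ/β^2 + lam - 1 = -s := by rw [hs]; ring
      linarith
    unfold Ups
    rw [if_pos hcond]
    set w := (1-2*u)^p with hw
    clear_value w
    have hw1 : 0 < 1 + w := by linarith
    have hEq : γ^2/β^2 - Ifun u - γ^2/(β^2*(1+w)) = r*w/(1+w) - Ifun u := by
      rw [hr]
      field_simp
      ring
    rw [hEq]
    have h6 : r*w/(1+w) ≤ r * |1-2*u|^p := by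
      rcases le_or_gt w 0 with h | h
      · exact le_trans
          (div_nonpos_of_nonpos_of_nonneg (mul_nonpos_of_nonneg_of_nonpos hr0.le h) hw1.le)
          (mul_nonneg hr0.le (pow_nonneg (abs_nonneg _) _))
      · calc r*w/(1+w) ≤ r*w := div_le_self (mul_nonneg hr0.le h.le) (by linarith)
          _ ≤ r*|1-2*u|^p := by
              apply mul_le_mul_of_nonneg_left _ hr0.le
              rw [hw, ← abs_pow]
              exact le_abs_self _
    have h7 : r * |1-2*u|^p ≤ r * t₀^(p-2) * (1-2*u)^2 := by
      have e1 : |1-2*u|^p = |1-2*u|^(p-2) * |1-2*u|^2 := by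
        rw [← pow_add]
        congr 1
        omega
      have e2 : |1-2*u|^(p-2) ≤ t₀^(p-2) :=
        pow_le_pow_left₀ (abs_nonneg _) (le_trans habs.le hδ''t) _
      have e3 : |1-2*u|^2 = (1-2*u)^2 := sq_abs _
      calc r * |1-2*u|^p = r * (|1-2*u|^(p-2) * |1-2*u|^2) := by rw [e1]
        _ ≤ r * (t₀^(p-2) * |1-2*u|^2) :=
            mul_le_mul_of_nonneg_left (mul_le_mul_of_nonneg_right e2 (by positivity)) hr0.le
        _ = r * t₀^(p-2) * (1-2*u)^2 := by rw [e3]; ring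
    have hIl : (1-2*u)^2/2 ≤ Ifun u := by nlinarith [pinsker hu0'.le hu1'.le]
    have hfin : -(4*κ)*(u-1/2)^2 = r*t₀^(p-2)*(1-2*u)^2 - (1-2*u)^2/2 := by
      rw [hκdef]
      ring
    linarith [h6, h7, hIl, hfin]
end
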